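/- The set of dominators of a node b is totally ordered by the dominance relation: if d₁ and d₂ both dominate b, then d₁ dominates d₂ or d₂ dominates d₁. -/

import Mathlib

def IsPath {V : Type*} (E : V → V → Prop) (r b : V) (p : List V) : Prop :=
  p.Chain' E ∧ p.head? = some r ∧ p.getLast? = some b

def Dominates {V : Type*} (E : V → V → Prop) (r d b : V) : Prop :=
  ∀ p : List V, IsPath E r b p → d ∈ p

lemma isPath_append {V : Type*} {E : V → V → Prop} {r m b : V} {p s : List V}
    (hp : IsPath E r m p) (hs : IsPath E m b s) : IsPath E r b (p ++ s.tail) := by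
  obtain ⟨hc, hh, hl⟩ := hp
  obtain ⟨hc', hh', hl'⟩ := hs
  obtain ⟨s', rfl⟩ : ∃ s', s = m :: s' := by
    cases s with
    | nil => simp at hh'
    | cons a t => exact ⟨t, by simp at hh'; rw [hh']⟩
  rcases s' with _ | ⟨a, s''⟩
  · simp at hl' ⊢
    exact ⟨hc, hh, hl' ▸ hl⟩
  · refine ⟨?_, ?_, ?_⟩
    · show List.IsChain E _; rw [List.isChain_append]
      refine ⟨hc, (List.isChain_cons.mp hc').2, ?_⟩
      intro x hx y hy
      rw [hl] at hx
      simp at hx hy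
      subst hx; subst hy
      exact (List.isChain_cons_cons.mp hc').1
    · rw [List.head?_append_of_ne_nil]
      · exact hh
      · intro h; rw [h] at hh; simp at hh
    · have h' : (a :: s'').getLast? = some b := by simpa using hl'
      rw [List.getLast?_append, List.tail_cons, h']
      rfl

lemma last_occ {V : Type*} (d : V) : ∀ P : List V, d ∈ P →
    ∃ t S, P = t ++ S ∧ S.head? = some d ∧ d ∉ S.tail := by
  intro P hP
  induction P with
  | nil => simp at hP
  | cons a P' ih =>
    by_cases h : d ∈ P'
    · obtain ⟨t, S, rfl, hS, hd⟩ := ih h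
      exact ⟨a :: t, S, rfl, hS, hd⟩
    · have : d = a := by rcases List.mem_cons.mp hP with h' | h' <;> tauto
      exact ⟨[], a :: P', by simp, by simp [this], h⟩

lemma isPath_suffix {V : Type*} {E : V → V → Prop} {r b d : V} {t S : List V}
    (h : IsPath E r b (t ++ S)) (hS : S.head? = some d) : IsPath E d b S := by
  obtain ⟨hc, _, hl⟩ := h
  have hSne : S ≠ [] := by intro h'; rw [h'] at hS; simp at hS
  refine ⟨hc.suffix ⟨t, rfl⟩, hS, ?_⟩
  rw [List.getLast?_append, Option.or_of_isSome (List.getLast?_isSome.mpr hSne)] at hl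
  exact hl

/-- the dominators of a node are totally ordered by dominance. -/
theorem dominators_totally_ordered
    {V : Type*} [Fintype V] (E : V → V → Prop) (r : V)
    (hreach : ∀ v : V, ∃ p : List V, IsPath E r v p)
    (b d₁ d₂ : V)
    (h₁ : Dominates E r d₁ b) (h₂ : Dominates E r d₂ b) :
    Dominates E r d₁ d₂ ∨ Dominates E r d₂ d₁ := by
  by_cases heq : d₁ = d₂
  · left
    intro p hp
    have := hp.2.2
    subst heq
    exact List.mem_of_getLast? this
  by_contra hcon
  push_neg at hcon
  obtain ⟨hn₁, hn₂⟩ := hcon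
  simp only [Dominates, not_forall] at hn₁ hn₂
  obtain ⟨p, hp, hpd₁⟩ := hn₁  -- path r → d₂ avoiding d₁
  obtain ⟨q, hq, hqd₂⟩ := hn₂  -- path r → d₁ avoiding d₂
  obtain ⟨P, hP⟩ := hreach b
  have hd₁P : d₁ ∈ P := h₁ P hP
  obtain ⟨t, S₁, rfl, hS₁h, hS₁t⟩ := last_occ d₁ P hd₁P
  have hS₁ : IsPath E d₁ b S₁ := isPath_suffix hP hS₁h
  have hQ : IsPath E r b (q ++ S₁.tail) := isPath_append hq hS₁
  have hd₂Q : d₂ ∈ q ++ S₁.tail := h₂ _ hQ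
  have hd₂S₁t : d₂ ∈ S₁.tail := by
    rcases List.mem_append.mp hd₂Q with h | h
    · exact absurd h hqd₂
    · exact h
  have hd₂S₁ : d₂ ∈ S₁ := List.mem_of_mem_tail hd₂S₁t
  obtain ⟨u, S₂, hsplit, hS₂h, _⟩ := last_occ d₂ S₁ hd₂S₁
  have hS₂ : IsPath E d₂ b S₂ := isPath_suffix (hsplit ▸ hS₁) hS₂h
  have hR : IsPath E r b (p ++ S₂.tail) := isPath_append hp hS₂
  have hd₁R : d₁ ∈ p ++ S₂.tail := h₁ _ hR
  have hd₁S₂t : d₁ ∈ S₂.tail := by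
    rcases List.mem_append.mp hd₁R with h | h
    · exact absurd h hpd₁
    · exact h
  rcases u with _ | ⟨a, u'⟩
  · simp at hsplit
    subst hsplit
    rw [hS₁h] at hS₂h
    exact heq (Option.some.inj hS₂h)
  · apply hS₁t
    have : S₂ ⊆ S₁.tail := by
      rw [hsplit]
      simp only [List.cons_append, List.tail_cons]
      exact fun x hx => List.mem_append.mpr (Or.inr hx)
    exact this (List.mem_of_mem_tail hd₁S₂t)
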